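/- In ℝ³, let S be the cone {(x,y,z) : x² + y² = k²z²} with k > 0, and let ρ be the plane z = m·y + h with h ≠ 0 and 0 < m·k < 1. Then the intersection S ∩ ρ is an ellipse; moreover every point P ∈ S ∩ ρ satisfies |P - F₁| + |P - F₂| = constant for two points F₁, F₂ ∈ ρ. -/

import Mathlib

/-- Dandelin: the section of the cone `x² + y² = k²z²` by the plane `z = m·y + h`
(`h ≠ 0`, `0 < m·k < 1`) is an ellipse: there are two points `F₁`, `F₂` in the plane
and a constant `d > 0` such that every point of the section has sum of distances `d`
to `F₁` and `F₂`. -/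
theorem cone_section_ellipse (k m h : ℝ) (hk : 0 < k) (hh : h ≠ 0)
    (hmk₀ : 0 < m * k) (hmk₁ : m * k < 1) :
    ∃ (F₁ F₂ : EuclideanSpace ℝ (Fin 3)) (d : ℝ), 0 < d ∧
      F₁ 2 = m * F₁ 1 + h ∧ F₂ 2 = m * F₂ 1 + h ∧
      ∀ P : EuclideanSpace ℝ (Fin 3),
        (P 0) ^ 2 + (P 1) ^ 2 = k ^ 2 * (P 2) ^ 2 → P 2 = m * P 1 + h →
        dist P F₁ + dist P F₂ = d := by
  have hm : 0 < m := by nlinarith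
  set c : ℝ := 1 - m ^ 2 * k ^ 2 with hc
  have hc0 : 0 < c := by nlinarith
  set R : ℝ := k ^ 2 * h ^ 2 / c with hR
  have hR0 : 0 < R := by positivity
  have hcR : c * R = k ^ 2 * h ^ 2 := by
    rw [hR, mul_div_assoc']; exact div_eq_of_eq_mul hc0.ne' (by ring)
  set y₀ : ℝ := k ^ 2 * m * h / c with hy₀
  have hy₀' : c * y₀ = k ^ 2 * m * h := by
    rw [hy₀, mul_div_assoc']; exact div_eq_of_eq_mul hc0.ne' (by ring)
  set s : ℝ := Real.sqrt (1 + k ^ 2) with hs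
  have hs0 : 0 < s := Real.sqrt_pos.2 (by positivity)
  have hs2 : s ^ 2 = 1 + k ^ 2 := Real.sq_sqrt (by positivity)
  set A : ℝ := Real.sqrt (R * (1 + m ^ 2) / c) with hA
  have hA0 : 0 < A := Real.sqrt_pos.2 (by positivity)
  have hA2 : A ^ 2 * c = R * (1 + m ^ 2) := by
    rw [hA, Real.sq_sqrt (by positivity)]; field_simp
  set e : ℝ := A * m * s / (1 + m ^ 2) with he
  have h1 : (1 + m ^ 2) * e = A * m * s := by
    rw [he, mul_div_assoc']; exact div_eq_of_eq_mul (by positivity) (by ring)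
  clear_value c R y₀ s A e
  have hmm : (0:ℝ) < 1 + m ^ 2 := by positivity
  have hconst : R + (1 + m ^ 2) * e ^ 2 = A ^ 2 := by
    have key : (1 + m ^ 2) * (R + (1 + m ^ 2) * e ^ 2) = (1 + m ^ 2) * A ^ 2 := by
      have h2 : ((1 + m ^ 2) * e) ^ 2 = (A * m * s) ^ 2 := by rw [h1]
      linear_combination h2 + A ^ 2 * m ^ 2 * hs2 - hA2 + A ^ 2 * hc
    exact mul_left_cancel₀ (ne_of_gt hmm) key
  refine ⟨!₂[0, y₀ + e, m * (y₀ + e) + h], !₂[0, y₀ - e, m * (y₀ - e) + h], 2 * A,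
    by positivity, ?_, ?_, ?_⟩
  · simp [Matrix.cons_val_one, Matrix.cons_val_two]
  · simp [Matrix.cons_val_one, Matrix.cons_val_two]
  intro P hcone hplane
  set x : ℝ := P 0
  set y : ℝ := P 1
  rw [hplane] at hcone
  set w : ℝ := y - y₀ with hw
  have hw2 : c * w = c * y - k ^ 2 * m * h := by rw [hw]; linear_combination -hy₀'
  have hx2 : x ^ 2 + c * w ^ 2 = R := by
    have key2 : c * (x ^ 2 + c * w ^ 2) = c * R := by
      have hw3 : (c * w) ^ 2 = (c * y - k ^ 2 * m * h) ^ 2 := by rw [hw2]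
      linear_combination hw3 + c * hcone +
        (y ^ 2 * c + k ^ 2 * h ^ 2) * hc - hcR
    exact mul_left_cancel₀ (ne_of_gt hc0) key2
  have hdist : ∀ (F : EuclideanSpace ℝ (Fin 3)), dist P F =
      Real.sqrt ((P 0 - F 0) ^ 2 + (P 1 - F 1) ^ 2 + (P 2 - F 2) ^ 2) := by
    intro F
    rw [EuclideanSpace.dist_eq, Fin.sum_univ_three]
    simp [Real.dist_eq, sq_abs]
  -- bound for nonnegativity
  have h5 : c * w ^ 2 ≤ R := by nlinarith [sq_nonneg x]
  have h6 : (m * s * w) ^ 2 * c = m ^ 2 * (1 + k ^ 2) * (c * w ^ 2) := by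
    linear_combination m ^ 2 * w ^ 2 * c * hs2
  have h6' : m ^ 2 * (1 + k ^ 2) * (c * w ^ 2) ≤ m ^ 2 * (1 + k ^ 2) * R :=
    mul_le_mul_of_nonneg_left h5 (by positivity)
  have hRc : R * (1 + m ^ 2) - R * (m ^ 2 * (1 + k ^ 2)) = R * c := by
    linear_combination -R * hc
  have h7 : (m * s * w) ^ 2 * c ≤ A ^ 2 * c := by
    have := mul_pos hR0 hc0
    linarith [h6, h6', hRc, hA2]
  have hbound : (m * s * w) ^ 2 ≤ A ^ 2 := le_of_mul_le_mul_right h7 hc0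
  have habs : |m * s * w| ≤ A := by
    rw [← Real.sqrt_sq_eq_abs, ← Real.sqrt_sq hA0.le]
    exact Real.sqrt_le_sqrt hbound
  obtain ⟨hb1, hb2⟩ := abs_le.mp habs
  have key : ∀ sgn : ℝ, sgn ^ 2 = 1 →
      x ^ 2 + (y - (y₀ + sgn * e)) ^ 2 + (m * y + h - (m * (y₀ + sgn * e) + h)) ^ 2
        = (A - sgn * (m * s * w)) ^ 2 := by
    intro sgn hsgn2
    linear_combination hx2 + hconst - 2 * sgn * w * h1 - m ^ 2 * w ^ 2 * hs2 -
      w ^ 2 * hc + ((1 + m ^ 2) * e ^ 2 - m ^ 2 * s ^ 2 * w ^ 2) * hsgn2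
  have d1 : dist P !₂[0, y₀ + e, m * (y₀ + e) + h] = A - m * s * w := by
    rw [hdist]
    have hk1 := key 1 (by norm_num)
    simp only [WithLp.ofLp_toLp, Matrix.cons_val_zero, Matrix.cons_val_one, Matrix.head_cons,
      Matrix.cons_val_two, Matrix.tail_cons]
    rw [show x - 0 = x by ring] at *
    rw [hplane]
    rw [show x ^ 2 + (y - (y₀ + e)) ^ 2 + (m * y + h - (m * (y₀ + e) + h)) ^ 2
        = (A - m * s * w) ^ 2 by linear_combination hk1]
    exact Real.sqrt_sq (by linarith)
  have d2 : dist P !₂[0, y₀ - e, m * (y₀ - e) + h] = A + m * s * w := by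
    rw [hdist]
    have hk2 := key (-1) (by norm_num)
    simp only [WithLp.ofLp_toLp, Matrix.cons_val_zero, Matrix.cons_val_one, Matrix.head_cons,
      Matrix.cons_val_two, Matrix.tail_cons]
    rw [hplane]
    rw [show x - 0 = x by ring,
      show x ^ 2 + (y - (y₀ - e)) ^ 2 + (m * y + h - (m * (y₀ - e) + h)) ^ 2
        = (A + m * s * w) ^ 2 by linear_combination hk2]
    exact Real.sqrt_sq (by linarith)
  rw [d1, d2]; ring
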